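/- Let (M,d) be a proper separable metric space and μ ∈ P₁(M). Then x is a Fréchet median of μ if and only if for every 1-Lipschitz function φ : M → ℝ one has φ(x) ≤ f*_μ + ∫ φ(p) dμ(p), where f*_μ is the minimum of f_μ(x) = ∫ d(x,p) dμ(p). -/

import Mathlib

open MeasureTheory Metric

lemma integrable_dist_of_moment
    {M : Type*} [MetricSpace M]
    [MeasurableSpace M] [BorelSpace M]
    (μ : Measure M) [IsProbabilityMeasure μ]
    (x₀ : M) (hmom : Integrable (fun p => dist x₀ p) μ) (x : M) :
    Integrable (fun p => dist x p) μ := by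
  refine (hmom.add (integrable_const (dist x x₀))).mono'
    ((continuous_const.dist continuous_id).aestronglyMeasurable) ?_
  filter_upwards with p
  simp only [Real.norm_eq_abs, abs_of_nonneg dist_nonneg]
  calc dist x p ≤ dist x x₀ + dist x₀ p := dist_triangle _ _ _
    _ = dist x₀ p + dist x x₀ := by ring

lemma integrable_of_lipschitz
    {M : Type*} [MetricSpace M]
    [MeasurableSpace M] [BorelSpace M]
    (μ : Measure M) [IsProbabilityMeasure μ]
    (x₀ : M) (hmom : Integrable (fun p => dist x₀ p) μ)
    (φ : M → ℝ) (hφ : LipschitzWith 1 φ) :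
    Integrable φ μ := by
  refine (hmom.add (integrable_const |φ x₀|)).mono'
    hφ.continuous.aestronglyMeasurable ?_
  filter_upwards with p
  have h := hφ.dist_le_mul p x₀
  simp only [NNReal.coe_one, one_mul, Real.dist_eq] at h
  have : |φ p| ≤ dist p x₀ + |φ x₀| := by
    calc |φ p| = |(φ p - φ x₀) + φ x₀| := by ring_nf
      _ ≤ |φ p - φ x₀| + |φ x₀| := abs_add_le _ _
      _ ≤ dist p x₀ + |φ x₀| := by linarith
  simpa [Real.norm_eq_abs, dist_comm] using this

/-- In a proper separable metric space, `x` is a Fréchet median of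
`μ ∈ P₁(M)` if and only if `φ x ≤ f*_μ + ∫ φ dμ` for every 1-Lipschitz `φ : M → ℝ`.
Here `f*_μ = f_μ m` for a global minimizer `m` of `f_μ`. -/
theorem frechet_median_iff_lipschitz_characterization
    {M : Type*} [MetricSpace M] [ProperSpace M] [TopologicalSpace.SeparableSpace M]
    [MeasurableSpace M] [BorelSpace M]
    (μ : Measure M) [IsProbabilityMeasure μ]
    (x₀ : M) (hmom : Integrable (fun p => dist x₀ p) μ)
    (m : M) (hm : ∀ y : M, (∫ p, dist m p ∂μ) ≤ ∫ p, dist y p ∂μ)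
    (x : M) :
    (∀ y : M, (∫ p, dist x p ∂μ) ≤ ∫ p, dist y p ∂μ) ↔
      (∀ φ : M → ℝ, LipschitzWith 1 φ → φ x ≤ (∫ p, dist m p ∂μ) + ∫ p, φ p ∂μ) := by
  have hdx : Integrable (fun p => dist x p) μ :=
    integrable_dist_of_moment μ x₀ hmom x
  constructor
  · intro hx φ hφ
    have hφi : Integrable φ μ := integrable_of_lipschitz μ x₀ hmom φ hφ
    have key : φ x ≤ (∫ p, dist x p ∂μ) + ∫ p, φ p ∂μ := by
      have h1 : ∀ p, φ x ≤ dist x p + φ p := by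
        intro p
        have h := hφ.dist_le_mul x p
        simp only [NNReal.coe_one, one_mul, Real.dist_eq] at h
        have := abs_le.mp (abs_le.mpr ⟨neg_abs_le _, le_abs_self _⟩ : |φ x - φ p| ≤ |φ x - φ p|)
        have := (abs_le.mp (le_trans (le_refl _) h : |φ x - φ p| ≤ dist x p)).2
        linarith [(abs_le.mp h).2]
      have : φ x = ∫ _, φ x ∂μ := by
        simp [measure_univ]
      rw [this, ← integral_add hdx hφi]
      exact integral_mono (integrable_const _) (hdx.add hφi) h1
    linarith [hx m]
  · intro h y
    have hneg : LipschitzWith 1 (fun p => -dist x p) := by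
      have : LipschitzWith 1 (fun p => dist x p) := LipschitzWith.dist_right x
      exact this.neg
    have := h _ hneg
    rw [integral_neg] at this
    have hx : (∫ p, dist x p ∂μ) ≤ ∫ p, dist m p ∂μ := by
      have h0 : dist x x = (0:ℝ) := dist_self x
      linarith
    exact hx.trans (hm y)
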